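/- In the polytope P_x defined by equations (a)–(g) with disjunctive structure, every extreme point (σ, ν) has σ equal to a 0–1 vector, i.e., there is d* with σ^{d*} = 1 and σ^d = 0 for d ≠ d*. -/

import Mathlib

private lemma aux_div (a b c t : ℝ) (ht : 0 < t) (h : a ≤ b / c) :
    a / t ≤ (b / t) / c := by
  rw [div_right_comm]
  exact (div_le_div_iff_of_pos_right ht).mpr h

theorem stmt_10 (n N D : ℕ) (hn : 1 ≤ n) (hN : 1 ≤ N) (hNn : N ≤ n)
    (F : Finset (Fin n)) (hD : D = F.card) (hD1 : 1 ≤ D)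
    (P : Set ((Fin (D + 1) → ℝ) × (Fin n → ℝ)))
    (hP : P = {p : (Fin (D + 1) → ℝ) × (Fin n → ℝ) |
      ∃ w : Fin (D + 1) → Fin n → ℝ,
        (∑ d, p.1 d) = 1 ∧
        (∀ d, 0 ≤ p.1 d) ∧
        (∀ j, p.2 j = ∑ d, w d j) ∧
        (∀ d, (∑ j, w d j) = p.1 d) ∧
        (∀ j, 0 ≤ w 0 j ∧ w 0 j ≤ p.1 0 / N) ∧
        (∀ d : Fin (D + 1), 1 ≤ (d : ℕ) → ∀ j ∉ F, w d j = 0) ∧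
        (∀ d : Fin (D + 1), 1 ≤ (d : ℕ) → ∀ j ∈ F,
          0 ≤ w d j ∧ w d j ≤ p.1 d / ((d : ℕ) : ℝ))}) :
    ∀ p ∈ Set.extremePoints ℝ P,
      ∃ dstar : Fin (D + 1), ∀ d, p.1 d = if d = dstar then 1 else 0 := by
  intro p hp
  obtain ⟨hpP, hext⟩ := hp
  have hpP' := hpP
  rw [hP] at hpP'
  obtain ⟨w, h1, h2, h3, h4, h5, h6, h7⟩ := hpP'
  by_contra hcon
  push_neg at hcon
  have hpos : ∃ d1 : Fin (D+1), 0 < p.1 d1 := by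
    have : (∑ d : Fin (D+1), (0:ℝ)) < ∑ d, p.1 d := by simp [h1]
    obtain ⟨i, _, hi⟩ := Finset.exists_lt_of_sum_lt this
    exact ⟨i, hi⟩
  obtain ⟨d1, hd1⟩ := hpos
  set s := p.1 d1 with hs_def
  have hle1 : s ≤ 1 := by
    have := Finset.single_le_sum (f := p.1) (fun i _ => h2 i) (Finset.mem_univ d1)
    rw [h1] at this; exact this
  have hne1 : s ≠ 1 := by
    intro hs1
    obtain ⟨d, hd⟩ := hcon d1
    apply hd
    by_cases hdd : d = d1
    · simp [hdd, ← hs_def, hs1]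
    · simp only [hdd, if_neg]
      have herase : ∑ x ∈ Finset.univ.erase d1, p.1 x = 0 := by
        have := Finset.add_sum_erase Finset.univ p.1 (Finset.mem_univ d1)
        rw [h1, ← hs_def, hs1] at this
        linarith
      have := (Finset.sum_eq_zero_iff_of_nonneg (fun i _ => h2 i)).mp herase d
        (by simp [hdd])
      simpa using this
  have hlt1 : s < 1 := lt_of_le_of_ne hle1 hne1
  have ht : (0:ℝ) < 1 - s := by linarith
  set t := 1 - s with ht_def
  have hsne : s ≠ 0 := ne_of_gt hd1
  have htne : t ≠ 0 := ne_of_gt ht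
  have hN0 : (0:ℝ) < N := by exact_mod_cast hN
  set qσ : Fin (D+1) → ℝ := fun d => if d = d1 then 1 else 0 with hqσ
  set q : (Fin (D + 1) → ℝ) × (Fin n → ℝ) :=
    (qσ, fun j => w d1 j / s) with hq_def
  set wq : Fin (D+1) → Fin n → ℝ :=
    fun d j => if d = d1 then w d1 j / s else 0 with hwq
  have hwq_rowsum : ∀ d, (∑ j, wq d j) = qσ d := by
    intro d
    by_cases hdd : d = d1
    · simp only [hwq, hqσ, hdd, if_pos rfl]
      rw [← Finset.sum_div, h4, ← hs_def, div_self hsne]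
    · simp [hwq, hqσ, hdd]
  have hqP : q ∈ P := by
    rw [hP]
    refine ⟨wq, ?_, ?_, ?_, ?_, ?_, ?_, ?_⟩
    · simp [hq_def, hqσ]
    · intro d; by_cases hdd : d = d1 <;> simp [hq_def, hqσ, hdd]
    · intro j; simp [hq_def, hwq]
    · exact hwq_rowsum
    · intro j
      by_cases h01 : (0 : Fin (D+1)) = d1
      · have h5j := h5 j
        constructor
        · simp only [hwq, if_pos h01]
          have : 0 ≤ w d1 j := by rw [← h01]; exact h5j.1
          exact div_nonneg this hd1.le
        · simp only [hwq, hq_def, hqσ, if_pos h01]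
          have hb : w d1 j ≤ s / N := by
            rw [hs_def, ← h01]; exact h5j.2
          have := aux_div (w d1 j) s N s hd1 hb
          rwa [div_self hsne] at this
      · simp only [hwq, hq_def, hqσ, if_neg h01]
        norm_num
    · intro d hd j hj
      by_cases hdd : d = d1
      · simp only [hwq, if_pos hdd]
        rw [hdd] at hd
        rw [h6 d1 hd j hj, zero_div]
      · simp [hwq, hdd]
    · intro d hd j hj
      obtain ⟨ha, hb⟩ := h7 d hd j hj
      by_cases hdd : d = d1
      · constructor
        · simp only [hwq, if_pos hdd]
          have : 0 ≤ w d1 j := by rw [← hdd]; exact ha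
          exact div_nonneg this hd1.le
        · simp only [hwq, hq_def, hqσ, if_pos hdd]
          have hb' : w d1 j ≤ s / ((d:ℕ):ℝ) := by
            rw [hs_def, ← hdd]; exact hb
          have := aux_div (w d1 j) s ((d:ℕ):ℝ) s hd1 hb'
          rwa [div_self hsne] at this
      · simp only [hwq, hq_def, hqσ, if_neg hdd]
        exact ⟨le_refl 0, by rw [zero_div]⟩
  set r : (Fin (D + 1) → ℝ) × (Fin n → ℝ) :=
    (fun d => (p.1 d - s * qσ d) / t, fun j => (p.2 j - s * (w d1 j / s)) / t)
      with hr_def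
  set wr : Fin (D+1) → Fin n → ℝ :=
    fun d j => (w d j - s * wq d j) / t with hwr
  have hr1d1 : (p.1 d1 - s * qσ d1) / t = 0 := by
    simp only [hqσ, if_pos rfl, mul_one, ← hs_def, sub_self, zero_div]
  have hrP : r ∈ P := by
    rw [hP]
    refine ⟨wr, ?_, ?_, ?_, ?_, ?_, ?_, ?_⟩
    · simp only [hr_def]
      rw [← Finset.sum_div, Finset.sum_sub_distrib, ← Finset.mul_sum, h1]
      have : (∑ d, qσ d) = 1 := by simp [hqσ]
      rw [this, mul_one, div_self htne]
    · intro d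
      by_cases hdd : d = d1
      · simp only [hr_def, hdd, hr1d1]; exact le_refl 0
      · simp only [hr_def, hqσ, if_neg hdd, mul_zero, sub_zero]
        exact div_nonneg (h2 d) ht.le
    · intro j
      simp only [hr_def, hwr]
      rw [← Finset.sum_div, Finset.sum_sub_distrib, ← Finset.mul_sum]
      have : (∑ d, wq d j) = w d1 j / s := by simp [hwq]
      rw [this, ← h3]
    · intro d
      simp only [hr_def, hwr]
      rw [← Finset.sum_div, Finset.sum_sub_distrib, ← Finset.mul_sum,
        hwq_rowsum, h4]
    · intro j
      by_cases h01 : (0 : Fin (D+1)) = d1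
      · have hwz : wr 0 j = 0 := by
          simp only [hwr, hwq, if_pos h01]
          rw [← h01, mul_div_cancel₀ _ hsne, sub_self, zero_div]
        have hrz : (p.1 0 - s * qσ 0) / t = 0 := by rw [h01]; exact hr1d1
        rw [hwz]
        simp only [hr_def, hrz]
        norm_num
      · have hw : wr 0 j = w 0 j / t := by simp [hwr, hwq, h01]
        have hr0 : (p.1 0 - s * qσ 0) / t = p.1 0 / t := by
          simp [hqσ, h01]
        rw [hw]
        simp only [hr_def, hr0]
        exact ⟨div_nonneg (h5 j).1 ht.le, aux_div _ _ _ _ ht (h5 j).2⟩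
    · intro d hd j hj
      have hwz := h6 d hd j hj
      by_cases hdd : d = d1
      · have hz1 : w d1 j = 0 := by rw [← hdd]; exact hwz
        simp [hwr, hwq, hdd, hwz, hz1]
      · simp [hwr, hwq, hdd, hwz]
    · intro d hd j hj
      obtain ⟨ha, hb⟩ := h7 d hd j hj
      by_cases hdd : d = d1
      · have hwz : wr d j = 0 := by
          simp only [hwr, hwq, if_pos hdd]
          rw [← hdd, mul_div_cancel₀ _ hsne, sub_self, zero_div]
        have hrz : (p.1 d - s * qσ d) / t = 0 := by rw [hdd]; exact hr1d1
        rw [hwz]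
        simp only [hr_def, hrz]
        norm_num
      · have hw : wr d j = w d j / t := by simp [hwr, hwq, hdd]
        have hr0 : (p.1 d - s * qσ d) / t = p.1 d / t := by simp [hqσ, hdd]
        rw [hw]
        simp only [hr_def, hr0]
        exact ⟨div_nonneg ha ht.le, aux_div _ _ _ _ ht hb⟩
  have hmem : p ∈ openSegment ℝ q r := by
    refine ⟨s, t, hd1, ht, by simp [ht_def], ?_⟩
    apply Prod.ext
    · funext d
      simp only [Prod.fst_add, Prod.smul_fst, hq_def, hr_def, Pi.add_apply,
        Pi.smul_apply, smul_eq_mul]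
      field_simp
      ring
    · funext j
      simp only [Prod.snd_add, Prod.smul_snd, hq_def, hr_def, Pi.add_apply,
        Pi.smul_apply, smul_eq_mul]
      field_simp
      ring
  have hqp : q = p := hext hqP hrP hmem
  have : q.1 d1 = p.1 d1 := by rw [hqp]
  simp only [hq_def, hqσ, if_pos rfl] at this
  rw [← hs_def] at this
  exact hne1 this.symm
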